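/- The space of alternating 3-forms on ℝ⁷ annihilated by the derivation action of each of the three 2-forms A₁ = e₃₄+e₅₆, A₂ = e₃₅−e₄₆, A₃ = e₃₆+e₄₅ (the generators of su(2) ⊂ so(7)) has dimension exactly 10; it is spanned by the nine 3-forms eᵢ∧deⱼ with i,j ∈ {1,2,7} together with e₁∧e₂∧e₇, where de₁ := e₃₅+e₄₆, de₂ := e₄₅−e₃₆, de₇ := e₃₄−e₅₆. -/

import Mathlib

open Matrix

/-- A coordinate `k`-tensor on `ℝⁿ`: the values on `k`-tuples of standard basis vectors. -/
abbrev Tensor (n k : ℕ) := (Fin k → Fin n) → ℝ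

/-- The tensor is alternating, i.e. it is the coordinate expression of an alternating
`k`-form on `ℝⁿ`. -/
def IsAlt {n k : ℕ} (ω : Tensor n k) : Prop :=
  ∀ (f : Fin k → Fin n) (σ : Equiv.Perm (Fin k)),
    ω (f ∘ σ) = ((Equiv.Perm.sign σ : ℤ) : ℝ) * ω f

/-- The Clifford relations `γᵢγⱼ + γⱼγᵢ = -2 δᵢⱼ 𝟙`. -/
def CliffordRel {n N : ℕ} (γ : Fin n → Matrix (Fin N) (Fin N) ℝ) : Prop :=
  ∀ i j, γ i * γ j + γ j * γ i =
    if i = j then (-2 : ℝ) • (1 : Matrix (Fin N) (Fin N) ℝ) else 0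

/-- Clifford action of a vector `X = Σ xᵢ eᵢ`: `γ(X) = Σ xᵢ γᵢ`. -/
noncomputable def gam {n N : ℕ} (γ : Fin n → Matrix (Fin N) (Fin N) ℝ)
    (X : Fin n → ℝ) : Matrix (Fin N) (Fin N) ℝ :=
  ∑ i, X i • γ i

/-- Clifford action of an (alternating) `k`-form:
`ρ(ω) = Σ_{i₁<⋯<i_k} ω(e_{i₁},…,e_{i_k}) γ_{i₁}⋯γ_{i_k}`, written here as the
full sum over all tuples divided by `k!` (for alternating `ω` and `γ` satisfying the
Clifford relations the two expressions agree). -/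
noncomputable def rho {n N : ℕ} (γ : Fin n → Matrix (Fin N) (Fin N) ℝ) {k : ℕ}
    (ω : Tensor n k) : Matrix (Fin N) (Fin N) ℝ :=
  (k.factorial : ℝ)⁻¹ • ∑ f : Fin k → Fin n, ω f • (List.ofFn fun i => γ (f i)).prod

/-- Interior product `X ⌟ ω` in coordinates: `(X⌟ω)(Y₁,…,Y_{k}) = ω(X,Y₁,…,Y_{k})`. -/
noncomputable def inter {n k : ℕ} (X : Fin n → ℝ) (ω : Tensor n (k + 1)) : Tensor n k :=
  fun g => ∑ j, X j * ω (Fin.cons j g)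

/-- Exterior product `X ∧ ω` in coordinates (identifying `X` with a `1`-form via the
standard inner product): `(X∧ω)(Y₀,…,Y_k) = Σ_j (-1)^j ⟨X,Y_j⟩ ω(Y₀,…,Ŷ_j,…,Y_k)`. -/
noncomputable def wedge {n k : ℕ} (X : Fin n → ℝ) (ω : Tensor n k) : Tensor n (k + 1) :=
  fun h => ∑ j : Fin (k + 1), (-1 : ℝ) ^ (j : ℕ) * X (h j) * ω fun i => h (j.succAbove i)

/-- The elementary form `e_{v 0} ∧ ⋯ ∧ e_{v (k-1)}` in coordinates. -/
noncomputable def elem {n k : ℕ} (v : Fin k → Fin n) : Tensor n k :=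
  fun f => Matrix.det (Matrix.of fun i j => if v i = f j then (1 : ℝ) else 0)

/-! ### The derivation action of `2`-forms (elements of `so(7)`) on forms. -/

/-- The skew-symmetric endomorphism `Â` associated to the `2`-form `e_a ∧ e_b`:
`e_a ↦ e_b`, `e_b ↦ -e_a`. -/
noncomputable def hat2 (a b : Fin 7) : Matrix (Fin 7) (Fin 7) ℝ :=
  Matrix.single b a 1 - Matrix.single a b 1

/-- `A₁ = e₃₄ + e₅₆` (0-based indices). -/
noncomputable def A1 : Matrix (Fin 7) (Fin 7) ℝ := hat2 2 3 + hat2 4 5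
/-- `A₂ = e₃₅ - e₄₆` (0-based indices). -/
noncomputable def A2 : Matrix (Fin 7) (Fin 7) ℝ := hat2 2 4 - hat2 3 5
/-- `A₃ = e₃₆ + e₄₅` (0-based indices). -/
noncomputable def A3 : Matrix (Fin 7) (Fin 7) ℝ := hat2 2 5 + hat2 3 4

/-- Derivation action of an endomorphism `M` on a coordinate `k`-tensor:
`(M·T)(X₁,…,X_k) = -Σ_j T(X₁,…,M Xⱼ,…,X_k)`. -/
noncomputable def der {n k : ℕ} (M : Matrix (Fin n) (Fin n) ℝ) (T : Tensor n k) :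
    Tensor n k :=
  fun f => -∑ j : Fin k, ∑ r : Fin n, M r (f j) * T (Function.update f j r)

/-- The standard basis vectors of `ℝ⁷`. -/
noncomputable def E7 (i : Fin 7) : Fin 7 → ℝ := Pi.single i 1

/-- `de₁ = e₃₅ + e₄₆`, `de₂ = e₄₅ - e₃₆`, `de₇ = e₃₄ - e₅₆` (0-based indices). -/
noncomputable def de : Fin 3 → Tensor 7 2 :=
  ![elem ![2, 4] + elem ![3, 5], elem ![3, 4] - elem ![2, 5], elem ![2, 3] - elem ![4, 5]]

/-- The distinguished indices `1, 2, 7` (0-based: `0, 1, 6`). -/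
def idx : Fin 3 → Fin 7 := ![0, 1, 6]

/-- The distinguished index pairs `(1,2), (1,7), (2,7)` (0-based). -/
def pf : Fin 3 → Fin 7 × Fin 7 := ![(0, 1), (0, 6), (1, 6)]

/-- The space of alternating `3`-forms on `ℝ⁷` annihilated by the
derivation action of `A₁ = e₃₄+e₅₆`, `A₂ = e₃₅-e₄₆`, `A₃ = e₃₆+e₄₅` is exactly the
span of the nine forms `eᵢ ∧ deⱼ` (`i,j ∈ {1,2,7}`) together with `e₁∧e₂∧e₇`, and it
has dimension exactly `10`. -/

lemma detUpdCol {m : Type*} [DecidableEq m] [Fintype m] (M : Matrix m m ℝ) (j : m) (b : m → ℝ) :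
    (M.updateCol j b).det = ∑ i, b i * adjugate M j i := by
  rw [← cramer_apply]
  have hb : b = ∑ i, b i • (Pi.single i 1 : m → ℝ) := by
    ext k; simp [Pi.single_apply, eq_comm]
  conv_lhs => rw [hb]
  rw [map_sum, Finset.sum_apply]
  refine Finset.sum_congr rfl fun i _ => ?_
  rw [_root_.map_smul]
  have : cramer M (Pi.single i 1) j = adjugate M j i := by
    have h1 : adjugate Mᵀ i j = cramer M (Pi.single i 1) j := by
      rw [adjugate_def]; rfl
    rw [← h1, ← adjugate_transpose]; rfl
  simp [this]

lemma detUpdRow {m : Type*} [DecidableEq m] [Fintype m] (M : Matrix m m ℝ) (i : m) (r : m → ℝ) :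
    (M.updateRow i r).det = ∑ j, r j * adjugate M j i := by
  rw [← det_transpose, ← updateCol_transpose, detUpdCol]
  refine Finset.sum_congr rfl fun j _ => ?_
  rw [← adjugate_transpose]; rfl

lemma hat2_sum (a b c : Fin 7) (g : Fin 7 → ℝ) :
    ∑ r, hat2 a b r c * g r
      = (if c = a then (1:ℝ) else 0) * g b - (if c = b then (1:ℝ) else 0) * g a := by
  simp only [hat2, Matrix.sub_apply, Matrix.single_apply, Matrix.of_apply, sub_mul,
    Finset.sum_sub_distrib, ite_mul, one_mul, zero_mul]
  congr 1
  · by_cases h : a = c <;> simp [h, eq_comm, Finset.sum_ite_eq]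
  · by_cases h : b = c <;> simp [h, eq_comm, Finset.sum_ite_eq]

lemma der_hat2_elem (a b : Fin 7) (v : Fin 3 → Fin 7) :
    der (hat2 a b) (elem v) = ∑ i : Fin 3,
      ((if v i = a then (1:ℝ) else 0) • elem (Function.update v i b)
        - (if v i = b then (1:ℝ) else 0) • elem (Function.update v i a)) := by
  funext f
  set D : Matrix (Fin 3) (Fin 3) ℝ := Matrix.of fun i k => if v i = f k then (1:ℝ) else 0 with hD
  have key : ∀ (r : Fin 7) (j : Fin 3),
      elem v (Function.update f j r)
        = ∑ i, (if v i = r then (1:ℝ) else 0) * adjugate D j i := by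
    intro r j
    rw [← detUpdCol]
    unfold elem
    congr 1
    ext i k
    by_cases h : k = j <;> simp [Function.update, h, Matrix.updateCol_apply, hD]
  have key2 : ∀ (r : Fin 7) (i : Fin 3),
      elem (Function.update v i r) f
        = ∑ j, (if f j = r then (1:ℝ) else 0) * adjugate D j i := by
    intro r i
    rw [← detUpdRow]
    unfold elem
    congr 1
    ext i' k
    by_cases h : i' = i
    · simp [Function.update, h, Matrix.updateRow_apply, hD, eq_comm]
    · have h' : ¬ i = i' := fun e => h e.symm
      simp [Function.update, h, h', Matrix.updateRow_apply, hD, eq_comm]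
  have step1 : ∀ j : Fin 3, ∑ r : Fin 7, hat2 a b r (f j) * elem v (Function.update f j r)
      = (if f j = a then (1:ℝ) else 0) * elem v (Function.update f j b)
        - (if f j = b then (1:ℝ) else 0) * elem v (Function.update f j a) := fun j =>
    hat2_sum a b (f j) _
  show -∑ j : Fin 3, ∑ r : Fin 7, hat2 a b r (f j) * elem v (Function.update f j r) = _
  simp only [step1]
  simp only [key, Finset.sum_apply, Pi.sub_apply, Pi.smul_apply, smul_eq_mul, key2,
    Fin.sum_univ_three]
  ring

/-! ### Basic structural lemmas -/

lemma isAlt_elem {n k : ℕ} (v : Fin k → Fin n) : IsAlt (elem v) := by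
  intro f σ
  show Matrix.det _ = _
  have : (Matrix.of fun i j => if v i = (f ∘ σ) j then (1:ℝ) else 0)
      = (Matrix.of fun i j => if v i = f j then (1:ℝ) else 0).submatrix id σ := rfl
  rw [this, Matrix.det_permute']
  push_cast
  rfl

lemma isAlt_add {n k : ℕ} {S T : Tensor n k} (hS : IsAlt S) (hT : IsAlt T) :
    IsAlt (S + T) := by
  intro f σ; simp only [Pi.add_apply, hS f σ, hT f σ]; ring

lemma isAlt_smul {n k : ℕ} (c : ℝ) {T : Tensor n k} (hT : IsAlt T) : IsAlt (c • T) := by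
  intro f σ; simp only [Pi.smul_apply, smul_eq_mul, hT f σ]; ring

lemma isAlt_neg {n k : ℕ} {T : Tensor n k} (hT : IsAlt T) : IsAlt (-T) := by
  intro f σ; simp only [Pi.neg_apply, hT f σ]; ring

lemma isAlt_sub {n k : ℕ} {S T : Tensor n k} (hS : IsAlt S) (hT : IsAlt T) :
    IsAlt (S - T) := by
  intro f σ; simp only [Pi.sub_apply, hS f σ, hT f σ]; ring

lemma isAlt_zero {n k : ℕ} : IsAlt (0 : Tensor n k) := by
  intro f σ; simp

/-! ### Linearity of `der` -/

lemma der_add_left {n k : ℕ} (M N : Matrix (Fin n) (Fin n) ℝ) (T : Tensor n k) :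
    der (M + N) T = der M T + der N T := by
  funext f
  simp [der, add_mul, Finset.sum_add_distrib]
  ring

lemma der_sub_left {n k : ℕ} (M N : Matrix (Fin n) (Fin n) ℝ) (T : Tensor n k) :
    der (M - N) T = der M T - der N T := by
  funext f
  simp [der, sub_mul, Finset.sum_sub_distrib]
  ring

lemma der_add {n k : ℕ} (M : Matrix (Fin n) (Fin n) ℝ) (S T : Tensor n k) :
    der M (S + T) = der M S + der M T := by
  funext f
  simp [der, mul_add, Finset.sum_add_distrib]
  ring

lemma der_sub {n k : ℕ} (M : Matrix (Fin n) (Fin n) ℝ) (S T : Tensor n k) :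
    der M (S - T) = der M S - der M T := by
  funext f
  simp [der, mul_sub, Finset.sum_sub_distrib]
  ring

lemma der_smul {n k : ℕ} (M : Matrix (Fin n) (Fin n) ℝ) (c : ℝ) (T : Tensor n k) :
    der M (c • T) = c • der M T := by
  funext f
  simp only [der, Pi.smul_apply, smul_eq_mul, mul_neg, neg_inj, Finset.mul_sum]
  exact Finset.sum_congr rfl fun j _ => Finset.sum_congr rfl fun r _ => by ring

lemma der_zero {n k : ℕ} (M : Matrix (Fin n) (Fin n) ℝ) : der M (0 : Tensor n k) = 0 := by
  funext f
  simp [der]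

/-! ### elem swaps and repeats -/

lemma elem_comp_perm {n k : ℕ} (v : Fin k → Fin n) (σ : Equiv.Perm (Fin k)) :
    elem (v ∘ σ) = fun f => ((Equiv.Perm.sign σ : ℤ) : ℝ) * elem v f := by
  funext f
  show Matrix.det _ = _
  have : (Matrix.of fun i j => if (v ∘ σ) i = f j then (1:ℝ) else 0)
      = (Matrix.of fun i j => if v i = f j then (1:ℝ) else 0).submatrix σ id := rfl
  rw [this, Matrix.det_permute]
  push_cast
  rfl

lemma elem_swap12 (x y z : Fin 7) : elem ![x,z,y] = -elem ![x,y,z] := by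
  have h : (![x,z,y] : Fin 3 → Fin 7) = ![x,y,z] ∘ (Equiv.swap 1 2) := by
    funext i; fin_cases i <;> simp [Equiv.swap_apply_def] <;> rfl
  rw [h, elem_comp_perm]
  funext f
  simp

lemma elem_swap01 (x y z : Fin 7) : elem ![y,x,z] = -elem ![x,y,z] := by
  have h : (![y,x,z] : Fin 3 → Fin 7) = ![x,y,z] ∘ (Equiv.swap 0 1) := by
    funext i; fin_cases i <;> simp [Equiv.swap_apply_def] <;> rfl
  rw [h, elem_comp_perm]
  funext f
  simp

lemma elem_rep12 (x y : Fin 7) : elem ![x,y,y] = 0 := by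
  funext f
  refine Matrix.det_zero_of_row_eq (show (1 : Fin 3) ≠ 2 by decide) rfl

lemma elem_rep01 (x y : Fin 7) : elem ![x,x,y] = 0 := by
  funext f
  refine Matrix.det_zero_of_row_eq (show (0 : Fin 3) ≠ 1 by decide) rfl

lemma elem_rep02 (x y : Fin 7) : elem ![x,y,x] = 0 := by
  funext f
  refine Matrix.det_zero_of_row_eq (show (0 : Fin 3) ≠ 2 by decide) rfl

/-! ### wedge with E7 turns elem pairs into elem triples -/

lemma wedge_add {n k : ℕ} (X : Fin n → ℝ) (ω ω' : Tensor n k) :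
    wedge X (ω + ω') = wedge X ω + wedge X ω' := by
  funext h
  simp [wedge, mul_add, Finset.sum_add_distrib]

lemma wedge_sub {n k : ℕ} (X : Fin n → ℝ) (ω ω' : Tensor n k) :
    wedge X (ω - ω') = wedge X ω - wedge X ω' := by
  funext h
  simp [wedge, mul_sub, Finset.sum_sub_distrib]

lemma wedge_elem2 (a p q : Fin 7) : wedge (E7 a) (elem ![p,q]) = elem ![a,p,q] := by
  funext f
  show _ = Matrix.det _
  rw [Matrix.det_succ_row_zero]
  refine Finset.sum_congr rfl fun j _ => ?_
  have h1 : E7 a (f j) = (if (![a,p,q] : Fin 3 → Fin 7) 0 = f j then (1:ℝ) else 0) := by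
    simp [E7, Pi.single_apply, eq_comm]
    dsimp +instances only [Matrix.cons_val_zero]
  have h2 : elem ![p,q] (fun i => f (j.succAbove i))
      = ((Matrix.of fun i k => if (![a,p,q] : Fin 3 → Fin 7) i = f k then (1:ℝ) else 0).submatrix
          Fin.succ j.succAbove).det := by
    unfold elem
    congr 1
  show (-1:ℝ)^(j:ℕ) * E7 a (f j) * elem ![p,q] (fun i => f (j.succAbove i)) = _
  rw [h1, h2]
  simp [Matrix.of_apply]

/-! ### update on triples -/

lemma upd0 {α : Type*} (u v w r : α) : Function.update ![u,v,w] (0:Fin 3) r = ![r,v,w] := by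
  funext i; fin_cases i <;> simp [Function.update]

lemma upd1 {α : Type*} (u v w r : α) : Function.update ![u,v,w] (1:Fin 3) r = ![u,r,w] := by
  funext i; fin_cases i <;> simp [Function.update]

lemma upd2 {α : Type*} (u v w r : α) : Function.update ![u,v,w] (2:Fin 3) r = ![u,v,r] := by
  funext i; fin_cases i <;> simp [Function.update]

/-! ### the generators as elem combinations -/

lemma wde0 (a : Fin 7) : wedge (E7 a) (de 0) = elem ![a,2,4] + elem ![a,3,5] := by
  show wedge (E7 a) (elem ![2,4] + elem ![3,5]) = _
  rw [wedge_add, wedge_elem2, wedge_elem2]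

lemma wde1 (a : Fin 7) : wedge (E7 a) (de 1) = elem ![a,3,4] - elem ![a,2,5] := by
  show wedge (E7 a) (elem ![3,4] - elem ![2,5]) = _
  rw [wedge_sub, wedge_elem2, wedge_elem2]

lemma wde2 (a : Fin 7) : wedge (E7 a) (de 2) = elem ![a,2,3] - elem ![a,4,5] := by
  show wedge (E7 a) (elem ![2,3] - elem ![4,5]) = _
  rw [wedge_sub, wedge_elem2, wedge_elem2]

/-! ### invariance of the generators -/

lemma derA1_w0 (a : Fin 7) (h2 : a ≠ 2) (h3 : a ≠ 3) (h4 : a ≠ 4) (h5 : a ≠ 5) :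
    der A1 (wedge (E7 a) (de 0)) = 0 := by
  rw [wde0]
  show der (hat2 2 3 + hat2 4 5) _ = 0
  simp only [der_add_left, der_add, der_hat2_elem, Fin.sum_univ_three, upd0, upd1, upd2,
    Matrix.cons_val_zero, Matrix.cons_val_one, Matrix.head_cons, Matrix.cons_val_two,
    Matrix.tail_cons]
  simp [h2, h3, h4, h5, elem_rep01, elem_rep02, elem_rep12]

lemma e32 (a : Fin 7) : elem ![a,3,2] = -elem ![a,2,3] := elem_swap12 a 2 3

lemma e42 (a : Fin 7) : elem ![a,4,2] = -elem ![a,2,4] := elem_swap12 a 2 4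

lemma e52 (a : Fin 7) : elem ![a,5,2] = -elem ![a,2,5] := elem_swap12 a 2 5

lemma e43 (a : Fin 7) : elem ![a,4,3] = -elem ![a,3,4] := elem_swap12 a 3 4

lemma e53 (a : Fin 7) : elem ![a,5,3] = -elem ![a,3,5] := elem_swap12 a 3 5

lemma e54 (a : Fin 7) : elem ![a,5,4] = -elem ![a,4,5] := elem_swap12 a 4 5

lemma derA1_w1 (a : Fin 7) (h2 : a ≠ 2) (h3 : a ≠ 3) (h4 : a ≠ 4) (h5 : a ≠ 5) :
    der A1 (wedge (E7 a) (de 1)) = 0 := by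
  rw [wde1]
  show der (hat2 2 3 + hat2 4 5) _ = 0
  simp only [der_add_left, der_sub_left, der_add, der_sub, der_hat2_elem, Fin.sum_univ_three,
    upd0, upd1, upd2, Matrix.cons_val_zero, Matrix.cons_val_one, Matrix.head_cons,
    Matrix.cons_val_two, Matrix.tail_cons]
  simp [h2, h3, h4, h5, elem_rep01, elem_rep02, elem_rep12, e32, e42, e52, e43, e53, e54]
  try abel

lemma derA1_w2 (a : Fin 7) (h2 : a ≠ 2) (h3 : a ≠ 3) (h4 : a ≠ 4) (h5 : a ≠ 5) :
    der A1 (wedge (E7 a) (de 2)) = 0 := by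
  rw [wde2]
  show der (hat2 2 3 + hat2 4 5) _ = 0
  simp only [der_add_left, der_sub_left, der_add, der_sub, der_hat2_elem, Fin.sum_univ_three,
    upd0, upd1, upd2, Matrix.cons_val_zero, Matrix.cons_val_one, Matrix.head_cons,
    Matrix.cons_val_two, Matrix.tail_cons]
  simp [h2, h3, h4, h5, elem_rep01, elem_rep02, elem_rep12, e32, e42, e52, e43, e53, e54]
  try abel

lemma derA2_w0 (a : Fin 7) (h2 : a ≠ 2) (h3 : a ≠ 3) (h4 : a ≠ 4) (h5 : a ≠ 5) :
    der A2 (wedge (E7 a) (de 0)) = 0 := by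
  rw [wde0]
  show der (hat2 2 4 - hat2 3 5) _ = 0
  simp only [der_add_left, der_sub_left, der_add, der_sub, der_hat2_elem, Fin.sum_univ_three,
    upd0, upd1, upd2, Matrix.cons_val_zero, Matrix.cons_val_one, Matrix.head_cons,
    Matrix.cons_val_two, Matrix.tail_cons]
  simp [h2, h3, h4, h5, elem_rep01, elem_rep02, elem_rep12, e32, e42, e52, e43, e53, e54]
  try abel

lemma derA2_w1 (a : Fin 7) (h2 : a ≠ 2) (h3 : a ≠ 3) (h4 : a ≠ 4) (h5 : a ≠ 5) :
    der A2 (wedge (E7 a) (de 1)) = 0 := by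
  rw [wde1]
  show der (hat2 2 4 - hat2 3 5) _ = 0
  simp only [der_add_left, der_sub_left, der_add, der_sub, der_hat2_elem, Fin.sum_univ_three,
    upd0, upd1, upd2, Matrix.cons_val_zero, Matrix.cons_val_one, Matrix.head_cons,
    Matrix.cons_val_two, Matrix.tail_cons]
  simp [h2, h3, h4, h5, elem_rep01, elem_rep02, elem_rep12, e32, e42, e52, e43, e53, e54]
  try abel

lemma derA2_w2 (a : Fin 7) (h2 : a ≠ 2) (h3 : a ≠ 3) (h4 : a ≠ 4) (h5 : a ≠ 5) :
    der A2 (wedge (E7 a) (de 2)) = 0 := by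
  rw [wde2]
  show der (hat2 2 4 - hat2 3 5) _ = 0
  simp only [der_add_left, der_sub_left, der_add, der_sub, der_hat2_elem, Fin.sum_univ_three,
    upd0, upd1, upd2, Matrix.cons_val_zero, Matrix.cons_val_one, Matrix.head_cons,
    Matrix.cons_val_two, Matrix.tail_cons]
  simp [h2, h3, h4, h5, elem_rep01, elem_rep02, elem_rep12, e32, e42, e52, e43, e53, e54]
  try abel

lemma derA3_w0 (a : Fin 7) (h2 : a ≠ 2) (h3 : a ≠ 3) (h4 : a ≠ 4) (h5 : a ≠ 5) :
    der A3 (wedge (E7 a) (de 0)) = 0 := by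
  rw [wde0]
  show der (hat2 2 5 + hat2 3 4) _ = 0
  simp only [der_add_left, der_sub_left, der_add, der_sub, der_hat2_elem, Fin.sum_univ_three,
    upd0, upd1, upd2, Matrix.cons_val_zero, Matrix.cons_val_one, Matrix.head_cons,
    Matrix.cons_val_two, Matrix.tail_cons]
  simp [h2, h3, h4, h5, elem_rep01, elem_rep02, elem_rep12, e32, e42, e52, e43, e53, e54]
  try abel

lemma derA3_w1 (a : Fin 7) (h2 : a ≠ 2) (h3 : a ≠ 3) (h4 : a ≠ 4) (h5 : a ≠ 5) :
    der A3 (wedge (E7 a) (de 1)) = 0 := by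
  rw [wde1]
  show der (hat2 2 5 + hat2 3 4) _ = 0
  simp only [der_add_left, der_sub_left, der_add, der_sub, der_hat2_elem, Fin.sum_univ_three,
    upd0, upd1, upd2, Matrix.cons_val_zero, Matrix.cons_val_one, Matrix.head_cons,
    Matrix.cons_val_two, Matrix.tail_cons]
  simp [h2, h3, h4, h5, elem_rep01, elem_rep02, elem_rep12, e32, e42, e52, e43, e53, e54]
  try abel

lemma derA3_w2 (a : Fin 7) (h2 : a ≠ 2) (h3 : a ≠ 3) (h4 : a ≠ 4) (h5 : a ≠ 5) :
    der A3 (wedge (E7 a) (de 2)) = 0 := by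
  rw [wde2]
  show der (hat2 2 5 + hat2 3 4) _ = 0
  simp only [der_add_left, der_sub_left, der_add, der_sub, der_hat2_elem, Fin.sum_univ_three,
    upd0, upd1, upd2, Matrix.cons_val_zero, Matrix.cons_val_one, Matrix.head_cons,
    Matrix.cons_val_two, Matrix.tail_cons]
  simp [h2, h3, h4, h5, elem_rep01, elem_rep02, elem_rep12, e32, e42, e52, e43, e53, e54]
  try abel

lemma derA1_e016 : der A1 (elem ![0,1,6]) = 0 := by
  show der (hat2 2 3 + hat2 4 5) _ = 0
  simp only [der_add_left, der_sub_left, der_hat2_elem, Fin.sum_univ_three,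
    upd0, upd1, upd2, Matrix.cons_val_zero, Matrix.cons_val_one, Matrix.head_cons,
    Matrix.cons_val_two, Matrix.tail_cons]
  simp

lemma derA2_e016 : der A2 (elem ![0,1,6]) = 0 := by
  show der (hat2 2 4 - hat2 3 5) _ = 0
  simp only [der_add_left, der_sub_left, der_hat2_elem, Fin.sum_univ_three,
    upd0, upd1, upd2, Matrix.cons_val_zero, Matrix.cons_val_one, Matrix.head_cons,
    Matrix.cons_val_two, Matrix.tail_cons]
  simp

lemma derA3_e016 : der A3 (elem ![0,1,6]) = 0 := by
  show der (hat2 2 5 + hat2 3 4) _ = 0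
  simp only [der_add_left, der_sub_left, der_hat2_elem, Fin.sum_univ_three,
    upd0, upd1, upd2, Matrix.cons_val_zero, Matrix.cons_val_one, Matrix.head_cons,
    Matrix.cons_val_two, Matrix.tail_cons]
  simp

/-! ### scalar equations from invariance -/

def co (u a : Fin 7) : ℝ := if u = a then 1 else 0

lemma eqPlus (a b c d : Fin 7) (T : Tensor 7 3) (h : der (hat2 a b + hat2 c d) T = 0)
    (x y z : Fin 7) :
    (co x a * T ![b,y,z] - co x b * T ![a,y,z] + (co x c * T ![d,y,z] - co x d * T ![c,y,z]))
    + (co y a * T ![x,b,z] - co y b * T ![x,a,z] + (co y c * T ![x,d,z] - co y d * T ![x,c,z]))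
    + (co z a * T ![x,y,b] - co z b * T ![x,y,a] + (co z c * T ![x,y,d] - co z d * T ![x,y,c]))
    = 0 := by
  have h' := congrFun h ![x,y,z]
  simp only [der, Pi.zero_apply, neg_eq_zero, Matrix.add_apply, add_mul,
    Finset.sum_add_distrib, Fin.sum_univ_three, Matrix.cons_val_zero, Matrix.cons_val_one,
    Matrix.head_cons, Matrix.cons_val_two, Matrix.tail_cons, upd0, upd1, upd2, hat2_sum] at h'
  dsimp +instances only [Matrix.cons_val_zero, Matrix.cons_val_one, Matrix.head_cons, Matrix.cons_val_two, Matrix.tail_cons] at h'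
  unfold co
  linarith [h']

lemma eqMinus (a b c d : Fin 7) (T : Tensor 7 3) (h : der (hat2 a b - hat2 c d) T = 0)
    (x y z : Fin 7) :
    (co x a * T ![b,y,z] - co x b * T ![a,y,z] - (co x c * T ![d,y,z] - co x d * T ![c,y,z]))
    + (co y a * T ![x,b,z] - co y b * T ![x,a,z] - (co y c * T ![x,d,z] - co y d * T ![x,c,z]))
    + (co z a * T ![x,y,b] - co z b * T ![x,y,a] - (co z c * T ![x,y,d] - co z d * T ![x,y,c]))
    = 0 := by
  have h' := congrFun h ![x,y,z]
  simp only [der, Pi.zero_apply, neg_eq_zero, Matrix.sub_apply, sub_mul,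
    Finset.sum_sub_distrib, Fin.sum_univ_three, Matrix.cons_val_zero, Matrix.cons_val_one,
    Matrix.head_cons, Matrix.cons_val_two, Matrix.tail_cons, upd0, upd1, upd2, hat2_sum] at h'
  dsimp +instances only [Matrix.cons_val_zero, Matrix.cons_val_one, Matrix.head_cons, Matrix.cons_val_two, Matrix.tail_cons] at h'
  unfold co
  linarith [h']

/-! ### consequences of IsAlt -/

section alt
variable {S : Tensor 7 3} (hS : IsAlt S)

lemma comp_swap01 (x y z : Fin 7) : (![x,y,z] : Fin 3 → Fin 7) ∘ (Equiv.swap 0 1) = ![y,x,z] := by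
  funext i; fin_cases i <;> simp [Equiv.swap_apply_def] <;> rfl

lemma comp_swap02 (x y z : Fin 7) : (![x,y,z] : Fin 3 → Fin 7) ∘ (Equiv.swap 0 2) = ![z,y,x] := by
  funext i; fin_cases i <;> simp [Equiv.swap_apply_def] <;> rfl

lemma comp_swap12 (x y z : Fin 7) : (![x,y,z] : Fin 3 → Fin 7) ∘ (Equiv.swap 1 2) = ![x,z,y] := by
  funext i; fin_cases i <;> simp [Equiv.swap_apply_def] <;> rfl

include hS

lemma alt_sw01 (x y z : Fin 7) : S ![y,x,z] = -S ![x,y,z] := by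
  have := hS ![x,y,z] (Equiv.swap 0 1)
  rw [comp_swap01] at this
  simp at this
  simpa using this

lemma alt_sw02 (x y z : Fin 7) : S ![z,y,x] = -S ![x,y,z] := by
  have := hS ![x,y,z] (Equiv.swap 0 2)
  rw [comp_swap02] at this
  simpa using this

lemma alt_sw12 (x y z : Fin 7) : S ![x,z,y] = -S ![x,y,z] := by
  have := hS ![x,y,z] (Equiv.swap 1 2)
  rw [comp_swap12] at this
  simpa using this

lemma alt_rep01 (x z : Fin 7) : S ![x,x,z] = 0 := by
  have := alt_sw01 hS x x z
  linarith

lemma alt_rep02 (x y : Fin 7) : S ![x,y,x] = 0 := by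
  have := alt_sw02 hS x y x
  linarith

lemma alt_rep12 (x y : Fin 7) : S ![x,y,y] = 0 := by
  have := alt_sw12 hS x y y
  linarith

end alt

/-! ### the invariant subspace as a submodule -/

def Ksub : Submodule ℝ (Tensor 7 3) where
  carrier := {T | IsAlt T ∧ der A1 T = 0 ∧ der A2 T = 0 ∧ der A3 T = 0}
  add_mem' := fun {a b} ha hb => by
    obtain ⟨a1, a2, a3, a4⟩ := ha
    obtain ⟨b1, b2, b3, b4⟩ := hb
    exact ⟨isAlt_add a1 b1, by rw [der_add, a2, b2, add_zero],
      by rw [der_add, a3, b3, add_zero], by rw [der_add, a4, b4, add_zero]⟩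
  zero_mem' := ⟨isAlt_zero, der_zero _, der_zero _, der_zero _⟩
  smul_mem' := fun c T hT => by
    obtain ⟨a1, a2, a3, a4⟩ := hT
    exact ⟨isAlt_smul c a1, by rw [der_smul, a2, smul_zero],
      by rw [der_smul, a3, smul_zero], by rw [der_smul, a4, smul_zero]⟩

lemma isAlt_wde (a : Fin 7) (j : Fin 3) : IsAlt (wedge (E7 a) (de j)) := by
  fin_cases j
  · show IsAlt (wedge (E7 a) (de 0))
    rw [show wedge (E7 a) (de 0) = elem ![a,2,4] + elem ![a,3,5] from wde0 a]
    exact isAlt_add (isAlt_elem _) (isAlt_elem _)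
  · show IsAlt (wedge (E7 a) (de 1))
    rw [show wedge (E7 a) (de 1) = elem ![a,3,4] - elem ![a,2,5] from wde1 a]
    exact isAlt_sub (isAlt_elem _) (isAlt_elem _)
  · show IsAlt (wedge (E7 a) (de 2))
    rw [show wedge (E7 a) (de 2) = elem ![a,2,3] - elem ![a,4,5] from wde2 a]
    exact isAlt_sub (isAlt_elem _) (isAlt_elem _)

lemma gens_mem_Ksub (a : Fin 7) (h2 : a ≠ 2) (h3 : a ≠ 3) (h4 : a ≠ 4) (h5 : a ≠ 5) (j : Fin 3) :
    wedge (E7 a) (de j) ∈ Ksub := by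
  fin_cases j
  · show wedge (E7 a) (de 0) ∈ Ksub
    exact ⟨isAlt_wde a 0, derA1_w0 a h2 h3 h4 h5, derA2_w0 a h2 h3 h4 h5, derA3_w0 a h2 h3 h4 h5⟩
  · show wedge (E7 a) (de 1) ∈ Ksub
    exact ⟨isAlt_wde a 1, derA1_w1 a h2 h3 h4 h5, derA2_w1 a h2 h3 h4 h5, derA3_w1 a h2 h3 h4 h5⟩
  · show wedge (E7 a) (de 2) ∈ Ksub
    exact ⟨isAlt_wde a 2, derA1_w2 a h2 h3 h4 h5, derA2_w2 a h2 h3 h4 h5, derA3_w2 a h2 h3 h4 h5⟩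

lemma e016_mem_Ksub : elem ![0,1,6] ∈ Ksub :=
  ⟨isAlt_elem _, derA1_e016, derA2_e016, derA3_e016⟩

/-! ### the ten generators, indexed -/

abbrev gidx : Type := Unit ⊕ Fin 3 × Fin 3

noncomputable def gens : gidx → Tensor 7 3 :=
  Sum.elim (fun _ => elem ![0,1,6]) (fun x => wedge (E7 (idx x.1)) (de x.2))

def pick : Fin 3 → Fin 7 × Fin 7 := ![(2,4),(3,4),(2,3)]

def tr : gidx → (Fin 3 → Fin 7) :=
  Sum.elim (fun _ => ![0,1,6]) (fun x => ![idx x.1, (pick x.2).1, (pick x.2).2])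

lemma elem_app (u v w x y z : Fin 7) : elem ![u,v,w] ![x,y,z] =
    (if u = x then (1:ℝ) else 0) * (if v = y then (1:ℝ) else 0) * (if w = z then (1:ℝ) else 0)
  - (if u = x then (1:ℝ) else 0) * (if v = z then (1:ℝ) else 0) * (if w = y then (1:ℝ) else 0)
  - (if u = y then (1:ℝ) else 0) * (if v = x then (1:ℝ) else 0) * (if w = z then (1:ℝ) else 0)
  + (if u = y then (1:ℝ) else 0) * (if v = z then (1:ℝ) else 0) * (if w = x then (1:ℝ) else 0)
  + (if u = z then (1:ℝ) else 0) * (if v = x then (1:ℝ) else 0) * (if w = y then (1:ℝ) else 0)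
  - (if u = z then (1:ℝ) else 0) * (if v = y then (1:ℝ) else 0) * (if w = x then (1:ℝ) else 0) := by
  simp only [elem, Matrix.det_fin_three, Matrix.of_apply, Matrix.cons_val_zero,
    Matrix.cons_val_one, Matrix.head_cons, Matrix.cons_val_two, Matrix.tail_cons]
  dsimp +instances only [Matrix.cons_val_zero, Matrix.cons_val_one, Matrix.head_cons, Matrix.cons_val_two, Matrix.tail_cons]
  try ring

lemma hGval : ∀ s t : gidx, gens t (tr s) = if s = t then 1 else 0 := by
  intro s t
  rcases s with _ | ⟨i, j⟩ <;> rcases t with _ | ⟨i', j'⟩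
  · simp [gens, tr, elem_app]
  · fin_cases i' <;> fin_cases j' <;>
      simp [-Prod.mk_zero_zero, -Prod.mk_one_one, gens, tr, idx, pick, wde0, wde1, wde2, elem_app, Sum.inr.injEq, Prod.mk.injEq, Fin.mk.injEq]
  · fin_cases i <;> fin_cases j <;>
      simp [gens, tr, idx, pick, elem_app]
  · fin_cases i <;> fin_cases j <;> fin_cases i' <;> fin_cases j' <;>
      simp [-Prod.mk_zero_zero, -Prod.mk_one_one, gens, tr, idx, pick, wde0, wde1, wde2, elem_app, Sum.inr.injEq, Prod.mk.injEq, Fin.mk.injEq]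

noncomputable def ev : Tensor 7 3 →ₗ[ℝ] (gidx → ℝ) where
  toFun := fun T s => T (tr s)
  map_add' := fun _ _ => rfl
  map_smul' := fun _ _ => rfl

lemma gens_indep : LinearIndependent ℝ gens := by
  apply LinearIndependent.of_comp ev
  have hcomp : (⇑ev ∘ gens) = fun t => Pi.single t (1:ℝ) := by
    funext t
    funext s
    show gens t (tr s) = _
    rw [hGval s t, Pi.single_apply]
  rw [hcomp, show (fun t => Pi.single t (1:ℝ)) = ⇑(Pi.basisFun ℝ gidx) from
    funext fun t => (Pi.basisFun_apply ℝ gidx t).symm]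
  exact (Pi.basisFun ℝ gidx).linearIndependent

lemma gens_range : Set.range gens
    = ({elem ![0, 1, 6]} ∪
        Set.range fun x : Fin 3 × Fin 3 => wedge (E7 (idx x.1)) (de x.2) : Set (Tensor 7 3)) := by
  unfold gens
  rw [Set.Sum.elim_range, Set.range_const]

lemma span_dim : Module.finrank ℝ
    ↥(Submodule.span ℝ
        ({elem ![0, 1, 6]} ∪
          Set.range fun x : Fin 3 × Fin 3 => wedge (E7 (idx x.1)) (de x.2) : Set (Tensor 7 3)))
      = 10 := by
  rw [← gens_range, finrank_span_eq_card gens_indep]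
  rfl

set_option maxHeartbeats 2000000 in
theorem invariant_three_forms_dim_ten :
    {T : Tensor 7 3 | IsAlt T ∧ der A1 T = 0 ∧ der A2 T = 0 ∧ der A3 T = 0}
      = (Submodule.span ℝ
          ({elem ![0, 1, 6]} ∪
            Set.range fun x : Fin 3 × Fin 3 => wedge (E7 (idx x.1)) (de x.2)) :
          Set (Tensor 7 3)) ∧
    Module.finrank ℝ
      ↥(Submodule.span ℝ
          ({elem ![0, 1, 6]} ∪
            Set.range fun x : Fin 3 × Fin 3 => wedge (E7 (idx x.1)) (de x.2))) = 10 := by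
  refine ⟨Set.Subset.antisymm ?_ ?_, span_dim⟩
  · -- hard direction: invariant forms lie in the span
    intro T hT
    obtain ⟨hAlt, h1, h2, h3⟩ := hT
    set S : Tensor 7 3 := T - T ![0,1,6] • elem ![0,1,6]
      - T ![0,2,4] • wedge (E7 0) (de 0) - T ![0,3,4] • wedge (E7 0) (de 1)
      - T ![0,2,3] • wedge (E7 0) (de 2)
      - T ![1,2,4] • wedge (E7 1) (de 0) - T ![1,3,4] • wedge (E7 1) (de 1)
      - T ![1,2,3] • wedge (E7 1) (de 2)
      - T ![6,2,4] • wedge (E7 6) (de 0) - T ![6,3,4] • wedge (E7 6) (de 1)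
      - T ![6,2,3] • wedge (E7 6) (de 2) with hSdef
    have hSalt : IsAlt S := by
      rw [hSdef]
      repeat' first
        | exact hAlt
        | apply isAlt_sub
        | apply isAlt_smul
        | exact isAlt_elem _
        | exact isAlt_wde _ _
    have hd1 : der (hat2 2 3 + hat2 4 5) S = 0 := by
      show der A1 S = 0
      rw [hSdef]
      simp only [der_sub, der_smul, h1, derA1_e016, derA1_w0 0 (by decide) (by decide) (by decide) (by decide), derA1_w1 0 (by decide) (by decide) (by decide) (by decide), derA1_w2 0 (by decide) (by decide) (by decide) (by decide), derA1_w0 1 (by decide) (by decide) (by decide) (by decide), derA1_w1 1 (by decide) (by decide) (by decide) (by decide), derA1_w2 1 (by decide) (by decide) (by decide) (by decide), derA1_w0 6 (by decide) (by decide) (by decide) (by decide), derA1_w1 6 (by decide) (by decide) (by decide) (by decide), derA1_w2 6 (by decide) (by decide) (by decide) (by decide), smul_zero, sub_zero]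
    have hd2 : der (hat2 2 4 - hat2 3 5) S = 0 := by
      show der A2 S = 0
      rw [hSdef]
      simp only [der_sub, der_smul, h2, derA2_e016, derA2_w0 0 (by decide) (by decide) (by decide) (by decide), derA2_w1 0 (by decide) (by decide) (by decide) (by decide), derA2_w2 0 (by decide) (by decide) (by decide) (by decide), derA2_w0 1 (by decide) (by decide) (by decide) (by decide), derA2_w1 1 (by decide) (by decide) (by decide) (by decide), derA2_w2 1 (by decide) (by decide) (by decide) (by decide), derA2_w0 6 (by decide) (by decide) (by decide) (by decide), derA2_w1 6 (by decide) (by decide) (by decide) (by decide), derA2_w2 6 (by decide) (by decide) (by decide) (by decide), smul_zero, sub_zero]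
    have b016 : S ![0,1,6] = 0 := by
      rw [hSdef]; simp [wde0, wde1, wde2, elem_app]
    have b024 : S ![0,2,4] = 0 := by
      rw [hSdef]; simp [wde0, wde1, wde2, elem_app]
    have b034 : S ![0,3,4] = 0 := by
      rw [hSdef]; simp [wde0, wde1, wde2, elem_app]
    have b023 : S ![0,2,3] = 0 := by
      rw [hSdef]; simp [wde0, wde1, wde2, elem_app]
    have b124 : S ![1,2,4] = 0 := by
      rw [hSdef]; simp [wde0, wde1, wde2, elem_app]
    have b134 : S ![1,3,4] = 0 := by
      rw [hSdef]; simp [wde0, wde1, wde2, elem_app]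
    have b123 : S ![1,2,3] = 0 := by
      rw [hSdef]; simp [wde0, wde1, wde2, elem_app]
    have b624 : S ![6,2,4] = 0 := by
      rw [hSdef]; simp [wde0, wde1, wde2, elem_app]
    have b634 : S ![6,3,4] = 0 := by
      rw [hSdef]; simp [wde0, wde1, wde2, elem_app]
    have b623 : S ![6,2,3] = 0 := by
      rw [hSdef]; simp [wde0, wde1, wde2, elem_app]
    have q013 : S ![0,1,3] = 0 := by
      have q := eqPlus 2 3 4 5 S hd1 0 1 2
      simp [co, alt_rep01 hSalt, alt_rep02 hSalt, alt_rep12 hSalt, b016, b024, b034, b023, b124, b134, b123, b624, b634, b623] at q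
      linarith [q]
    have q012 : S ![0,1,2] = 0 := by
      have q := eqPlus 2 3 4 5 S hd1 0 1 3
      simp [co, alt_rep01 hSalt, alt_rep02 hSalt, alt_rep12 hSalt, b016, b024, b034, b023, b124, b134, b123, b624, b634, b623] at q
      linarith [q]
    have q015 : S ![0,1,5] = 0 := by
      have q := eqPlus 2 3 4 5 S hd1 0 1 4
      simp [co, alt_rep01 hSalt, alt_rep02 hSalt, alt_rep12 hSalt, b016, b024, b034, b023, b124, b134, b123, b624, b634, b623] at q
      linarith [q]
    have q014 : S ![0,1,4] = 0 := by
      have q := eqPlus 2 3 4 5 S hd1 0 1 5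
      simp [co, alt_rep01 hSalt, alt_rep02 hSalt, alt_rep12 hSalt, b016, b024, b034, b023, b124, b134, b123, b624, b634, b623] at q
      linarith [q]
    have q036 : S ![0,3,6] = 0 := by
      have q := eqPlus 2 3 4 5 S hd1 0 2 6
      simp [co, alt_rep01 hSalt, alt_rep02 hSalt, alt_rep12 hSalt, b016, b024, b034, b023, b124, b134, b123, b624, b634, b623] at q
      linarith [q]
    have q026 : S ![0,2,6] = 0 := by
      have q := eqPlus 2 3 4 5 S hd1 0 3 6
      simp [co, alt_rep01 hSalt, alt_rep02 hSalt, alt_rep12 hSalt, b016, b024, b034, b023, b124, b134, b123, b624, b634, b623] at q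
      linarith [q]
    have q056 : S ![0,5,6] = 0 := by
      have q := eqPlus 2 3 4 5 S hd1 0 4 6
      simp [co, alt_rep01 hSalt, alt_rep02 hSalt, alt_rep12 hSalt, b016, b024, b034, b023, b124, b134, b123, b624, b634, b623] at q
      linarith [q]
    have q046 : S ![0,4,6] = 0 := by
      have q := eqPlus 2 3 4 5 S hd1 0 5 6
      simp [co, alt_rep01 hSalt, alt_rep02 hSalt, alt_rep12 hSalt, b016, b024, b034, b023, b124, b134, b123, b624, b634, b623] at q
      linarith [q]
    have q136 : S ![1,3,6] = 0 := by
      have q := eqPlus 2 3 4 5 S hd1 1 2 6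
      simp [co, alt_rep01 hSalt, alt_rep02 hSalt, alt_rep12 hSalt, b016, b024, b034, b023, b124, b134, b123, b624, b634, b623] at q
      linarith [q]
    have q126 : S ![1,2,6] = 0 := by
      have q := eqPlus 2 3 4 5 S hd1 1 3 6
      simp [co, alt_rep01 hSalt, alt_rep02 hSalt, alt_rep12 hSalt, b016, b024, b034, b023, b124, b134, b123, b624, b634, b623] at q
      linarith [q]
    have q156 : S ![1,5,6] = 0 := by
      have q := eqPlus 2 3 4 5 S hd1 1 4 6
      simp [co, alt_rep01 hSalt, alt_rep02 hSalt, alt_rep12 hSalt, b016, b024, b034, b023, b124, b134, b123, b624, b634, b623] at q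
      linarith [q]
    have q146 : S ![1,4,6] = 0 := by
      have q := eqPlus 2 3 4 5 S hd1 1 5 6
      simp [co, alt_rep01 hSalt, alt_rep02 hSalt, alt_rep12 hSalt, b016, b024, b034, b023, b124, b134, b123, b624, b634, b623] at q
      linarith [q]
    have q035 : S ![0,3,5] = 0 := by
      have q := eqPlus 2 3 4 5 S hd1 0 2 5
      simp [co, alt_rep01 hSalt, alt_rep02 hSalt, alt_rep12 hSalt, b016, b024, b034, b023, b124, b134, b123, b624, b634, b623] at q
      linarith [q]
    have q025 : S ![0,2,5] = 0 := by
      have q := eqPlus 2 3 4 5 S hd1 0 2 4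
      simp [co, alt_rep01 hSalt, alt_rep02 hSalt, alt_rep12 hSalt, b016, b024, b034, b023, b124, b134, b123, b624, b634, b623] at q
      linarith [q]
    have q045 : S ![0,4,5] = 0 := by
      have q := eqMinus 2 4 3 5 S hd2 0 2 5
      simp [co, alt_rep01 hSalt, alt_rep02 hSalt, alt_rep12 hSalt, b016, b024, b034, b023, b124, b134, b123, b624, b634, b623] at q
      linarith [q]
    have q135 : S ![1,3,5] = 0 := by
      have q := eqPlus 2 3 4 5 S hd1 1 2 5
      simp [co, alt_rep01 hSalt, alt_rep02 hSalt, alt_rep12 hSalt, b016, b024, b034, b023, b124, b134, b123, b624, b634, b623] at q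
      linarith [q]
    have q125 : S ![1,2,5] = 0 := by
      have q := eqPlus 2 3 4 5 S hd1 1 2 4
      simp [co, alt_rep01 hSalt, alt_rep02 hSalt, alt_rep12 hSalt, b016, b024, b034, b023, b124, b134, b123, b624, b634, b623] at q
      linarith [q]
    have q145 : S ![1,4,5] = 0 := by
      have q := eqMinus 2 4 3 5 S hd2 1 2 5
      simp [co, alt_rep01 hSalt, alt_rep02 hSalt, alt_rep12 hSalt, b016, b024, b034, b023, b124, b134, b123, b624, b634, b623] at q
      linarith [q]
    have q635 : S ![6,3,5] = 0 := by
      have q := eqPlus 2 3 4 5 S hd1 6 2 5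
      simp [co, alt_rep01 hSalt, alt_rep02 hSalt, alt_rep12 hSalt, b016, b024, b034, b023, b124, b134, b123, b624, b634, b623] at q
      linarith [q]
    have q625 : S ![6,2,5] = 0 := by
      have q := eqPlus 2 3 4 5 S hd1 6 2 4
      simp [co, alt_rep01 hSalt, alt_rep02 hSalt, alt_rep12 hSalt, b016, b024, b034, b023, b124, b134, b123, b624, b634, b623] at q
      linarith [q]
    have q645 : S ![6,4,5] = 0 := by
      have q := eqMinus 2 4 3 5 S hd2 6 2 5
      simp [co, alt_rep01 hSalt, alt_rep02 hSalt, alt_rep12 hSalt, b016, b024, b034, b023, b124, b134, b123, b624, b634, b623] at q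
      linarith [q]
    have q234 : S ![2,3,4] = 0 := by
      have q := eqPlus 2 3 4 5 S hd1 2 3 5
      simp [co, alt_rep01 hSalt, alt_rep02 hSalt, alt_rep12 hSalt, b016, b024, b034, b023, b124, b134, b123, b624, b634, b623] at q
      linarith [q]
    have q235 : S ![2,3,5] = 0 := by
      have q := eqPlus 2 3 4 5 S hd1 2 3 4
      simp [co, alt_rep01 hSalt, alt_rep02 hSalt, alt_rep12 hSalt, b016, b024, b034, b023, b124, b134, b123, b624, b634, b623] at q
      linarith [q]
    have q245 : S ![2,4,5] = 0 := by
      have q := eqPlus 2 3 4 5 S hd1 3 4 5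
      simp [co, alt_rep01 hSalt, alt_rep02 hSalt, alt_rep12 hSalt, b016, b024, b034, b023, b124, b134, b123, b624, b634, b623] at q
      linarith [q]
    have q345 : S ![3,4,5] = 0 := by
      have q := eqPlus 2 3 4 5 S hd1 2 4 5
      simp [co, alt_rep01 hSalt, alt_rep02 hSalt, alt_rep12 hSalt, b016, b024, b034, b023, b124, b134, b123, b624, b634, b623] at q
      linarith [q]
    have s236 : S ![2,3,6] = 0 := by
      simp [alt_sw02 hSalt 6 3 2, alt_sw12 hSalt 6 2 3, b623]
    have s246 : S ![2,4,6] = 0 := by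
      simp [alt_sw02 hSalt 6 4 2, alt_sw12 hSalt 6 2 4, b624]
    have s256 : S ![2,5,6] = 0 := by
      simp [alt_sw02 hSalt 6 5 2, alt_sw12 hSalt 6 2 5, q625]
    have s346 : S ![3,4,6] = 0 := by
      simp [alt_sw02 hSalt 6 4 3, alt_sw12 hSalt 6 3 4, b634]
    have s356 : S ![3,5,6] = 0 := by
      simp [alt_sw02 hSalt 6 5 3, alt_sw12 hSalt 6 3 5, q635]
    have s456 : S ![4,5,6] = 0 := by
      simp [alt_sw02 hSalt 6 5 4, alt_sw12 hSalt 6 4 5, q645]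
    have key : ∀ x y z : Fin 7, x < y → y < z → S ![x,y,z] = 0 := by
      intro x y z hxy hyz
      fin_cases x <;> fin_cases y <;> fin_cases z <;>
        first
          | exact absurd hxy (by decide)
          | exact absurd hyz (by decide)
          | exact b016
          | exact q012
          | exact q013
          | exact q014
          | exact q015
          | exact b023
          | exact b024
          | exact q025
          | exact q026
          | exact b034
          | exact q035
          | exact q036
          | exact q045
          | exact q046
          | exact q056
          | exact b123
          | exact b124
          | exact q125
          | exact q126
          | exact b134
          | exact q135
          | exact q136
          | exact q145
          | exact q146
          | exact q156
          | exact q234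
          | exact q235
          | exact q245
          | exact q345
          | exact s236
          | exact s246
          | exact s256
          | exact s346
          | exact s356
          | exact s456
    have key3 : ∀ x y z : Fin 7, S ![x,y,z] = 0 := by
      intro x y z
      rcases lt_trichotomy x y with hxy | rfl | hxy
      · rcases lt_trichotomy y z with hyz | rfl | hyz
        · exact key x y z hxy hyz
        · exact alt_rep12 hSalt x y
        · rcases lt_trichotomy x z with hxz | rfl | hxz
          · rw [alt_sw12 hSalt x z y, key x z y hxz hyz, neg_zero]
          · exact alt_rep02 hSalt x y
          · rw [alt_sw02 hSalt z y x, alt_sw12 hSalt z x y, key z x y hxz hxy]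
            simp
      · exact alt_rep01 hSalt x z
      · rcases lt_trichotomy x z with hxz | rfl | hxz
        · rw [alt_sw01 hSalt y x z, key y x z hxy hxz, neg_zero]
        · exact alt_rep02 hSalt x y
        · rcases lt_trichotomy y z with hyz | rfl | hyz
          · rw [alt_sw01 hSalt y x z, alt_sw12 hSalt y z x, key y z x hyz hxz]
            simp
          · exact alt_rep12 hSalt x y
          · rw [alt_sw02 hSalt z y x, key z y x hyz hxy, neg_zero]
    have hS0 : S = 0 := by
      funext f
      have hf : f = ![f 0, f 1, f 2] := by
        funext i; fin_cases i <;> rfl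
      rw [hf, key3]
      rfl
    have hTeq : T = T ![0,1,6] • elem ![0,1,6]
      + T ![0,2,4] • wedge (E7 0) (de 0) + T ![0,3,4] • wedge (E7 0) (de 1)
      + T ![0,2,3] • wedge (E7 0) (de 2)
      + T ![1,2,4] • wedge (E7 1) (de 0) + T ![1,3,4] • wedge (E7 1) (de 1)
      + T ![1,2,3] • wedge (E7 1) (de 2)
      + T ![6,2,4] • wedge (E7 6) (de 0) + T ![6,3,4] • wedge (E7 6) (de 1)
      + T ![6,2,3] • wedge (E7 6) (de 2) := by
      have h0 := hS0
      rw [hSdef] at h0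
      funext f
      have := congrFun h0 f
      simp only [Pi.sub_apply, Pi.add_apply, Pi.smul_apply, smul_eq_mul, Pi.zero_apply] at this ⊢
      linarith [this]
    have hw : ∀ (i j : Fin 3), wedge (E7 (idx i)) (de j)
        ∈ Submodule.span ℝ ({elem ![0, 1, 6]} ∪
            Set.range fun x : Fin 3 × Fin 3 => wedge (E7 (idx x.1)) (de x.2) : Set (Tensor 7 3)) :=
      fun i j => Submodule.subset_span (Set.mem_union_right _ ⟨(i,j), rfl⟩)
    have he : elem ![0,1,6]
        ∈ Submodule.span ℝ ({elem ![0, 1, 6]} ∪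
            Set.range fun x : Fin 3 × Fin 3 => wedge (E7 (idx x.1)) (de x.2) : Set (Tensor 7 3)) :=
      Submodule.subset_span (Set.mem_union_left _ rfl)
    rw [hTeq]
    refine Submodule.add_mem _ (Submodule.add_mem _ (Submodule.add_mem _ (Submodule.add_mem _
      (Submodule.add_mem _ (Submodule.add_mem _ (Submodule.add_mem _ (Submodule.add_mem _
      (Submodule.add_mem _ (Submodule.smul_mem _ _ he) (Submodule.smul_mem _ _ (hw 0 0)))
      (Submodule.smul_mem _ _ (hw 0 1))) (Submodule.smul_mem _ _ (hw 0 2)))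
      (Submodule.smul_mem _ _ (hw 1 0))) (Submodule.smul_mem _ _ (hw 1 1)))
      (Submodule.smul_mem _ _ (hw 1 2))) (Submodule.smul_mem _ _ (hw 2 0)))
      (Submodule.smul_mem _ _ (hw 2 1))) (Submodule.smul_mem _ _ (hw 2 2))
  · -- easy direction: the span is contained in the invariant space
    have hle : Submodule.span ℝ ({elem ![0, 1, 6]} ∪
        Set.range fun x : Fin 3 × Fin 3 => wedge (E7 (idx x.1)) (de x.2) : Set (Tensor 7 3))
        ≤ Ksub := by
      rw [Submodule.span_le]
      rintro g (rfl | ⟨⟨i,j⟩, rfl⟩)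
      · exact e016_mem_Ksub
      · have hi : idx i ≠ 2 ∧ idx i ≠ 3 ∧ idx i ≠ 4 ∧ idx i ≠ 5 := by
          fin_cases i <;> exact ⟨by decide, by decide, by decide, by decide⟩
        exact gens_mem_Ksub (idx i) hi.1 hi.2.1 hi.2.2.1 hi.2.2.2 j
    intro T hT
    exact hle hT
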